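/- Let φ be a faithful state on Mat_m(ℂ) and α : Mat_n(ℂ) → Mat_m(ℂ) a completely positive unital map. Define the sesquilinear form on Mat_n(ℂ) ⊗ Mat_m(ℂ) by extending φ̃(x ⊗ y) = ⟨α(x), y⟩_φ = Tr(ρ^{1/2} α(x) ρ^{1/2} y) linearly, where ρ is the density matrix of φ. Then φ̃ is a positive linear functional on the C*-algebra Mat_n(ℂ) ⊗ Mat_m(ℂ)^{op}. -/

import Mathlib

open Matrix TensorProduct
open scoped ComplexOrder

/-- Complete positivity for a linear map between matrix algebras. -/
def IsCompletelyPositiveM {n m : ℕ}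
    (α : Matrix (Fin n) (Fin n) ℂ →ₗ[ℂ] Matrix (Fin m) (Fin m) ℂ) : Prop :=
  ∀ (k : ℕ) (M : Matrix (Fin k × Fin n) (Fin k × Fin n) ℂ), M.PosSemidef →
    (Matrix.of fun p q : Fin k × Fin m =>
      α (Matrix.of fun a b => M (p.1, a) (q.1, b)) p.2 q.2).PosSemidef

/-- The functional `φ̃` on `Mat_n(ℂ) ⊗ Mat_m(ℂ)ᵒᵖ` determined by
`φ̃(x ⊗ yᵒᵖ) = ⟨α(x), y⟩_φ = Tr(ρ^{1/2} α(x) ρ^{1/2} y)`, where `s = ρ^{1/2}`. -/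
noncomputable def pairingFunctional {n m : ℕ}
    (α : Matrix (Fin n) (Fin n) ℂ →ₗ[ℂ] Matrix (Fin m) (Fin m) ℂ)
    (s : Matrix (Fin m) (Fin m) ℂ) :
    TensorProduct ℂ (Matrix (Fin n) (Fin n) ℂ) (Matrix (Fin m) (Fin m) ℂ)ᵐᵒᵖ →ₗ[ℂ] ℂ :=
  TensorProduct.lift
    (LinearMap.mk₂ ℂ (fun x y => (s * α x * s * y.unop).trace)
      (by intros; simp [Matrix.add_mul, Matrix.mul_add, Matrix.trace_add, Matrix.mul_smul,
        Matrix.smul_mul, Matrix.trace_smul, MulOpposite.unop_add, MulOpposite.unop_smul])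
      (by intros; simp [Matrix.add_mul, Matrix.mul_add, Matrix.trace_add, Matrix.mul_smul,
        Matrix.smul_mul, Matrix.trace_smul, MulOpposite.unop_add, MulOpposite.unop_smul])
      (by intros; simp [Matrix.add_mul, Matrix.mul_add, Matrix.trace_add, Matrix.mul_smul,
        Matrix.smul_mul, Matrix.trace_smul, MulOpposite.unop_add, MulOpposite.unop_smul])
      (by intros; simp [Matrix.add_mul, Matrix.mul_add, Matrix.trace_add, Matrix.mul_smul,
        Matrix.smul_mul, Matrix.trace_smul, MulOpposite.unop_add, MulOpposite.unop_smul]))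

/-- Finite-dimensional instance of the construction of the bimodule of a channel: for a
completely positive unital `α : Mat_n(ℂ) → Mat_m(ℂ)` and a faithful state `φ` with density
matrix `ρ`, the functional `φ̃(x ⊗ yᵒᵖ) = Tr(ρ^{1/2} α(x) ρ^{1/2} y)` is a positive linear
functional on `Mat_n(ℂ) ⊗ Mat_m(ℂ)ᵒᵖ`: it is nonnegative on every element of the form
`z* z`, `z = Σ_i x_i ⊗ (y_i)ᵒᵖ` (so that `z* z = Σ_{i,j} (x_i* x_j) ⊗ (y_j y_i*)ᵒᵖ`). -/
theorem pairing_functional_positive {n m : ℕ}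
    (α : Matrix (Fin n) (Fin n) ℂ →ₗ[ℂ] Matrix (Fin m) (Fin m) ℂ)
    (hunital : α 1 = 1) (hCP : IsCompletelyPositiveM α)
    {ρ : Matrix (Fin m) (Fin m) ℂ} (hρ : ρ.PosDef) (htr : ρ.trace = 1)
    (k : ℕ) (x : Fin k → Matrix (Fin n) (Fin n) ℂ) (y : Fin k → Matrix (Fin m) (Fin m) ℂ) :
    0 ≤ (pairingFunctional α (hρ.posSemidef.1.eigenvectorUnitary.1 *
        diagonal (((↑) : ℝ → ℂ) ∘ Real.sqrt ∘ hρ.posSemidef.1.eigenvalues) *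
        (star hρ.posSemidef.1.eigenvectorUnitary : Matrix (Fin m) (Fin m) ℂ))
        (∑ i, ∑ j, (star (x i) * x j) ⊗ₜ[ℂ] MulOpposite.op (y j * star (y i)))).re ∧
      (pairingFunctional α (hρ.posSemidef.1.eigenvectorUnitary.1 *
        diagonal (((↑) : ℝ → ℂ) ∘ Real.sqrt ∘ hρ.posSemidef.1.eigenvalues) *
        (star hρ.posSemidef.1.eigenvectorUnitary : Matrix (Fin m) (Fin m) ℂ))
        (∑ i, ∑ j, (star (x i) * x j) ⊗ₜ[ℂ] MulOpposite.op (y j * star (y i)))).im = 0 := by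
  set s := hρ.posSemidef.1.eigenvectorUnitary.1 *
        diagonal (((↑) : ℝ → ℂ) ∘ Real.sqrt ∘ hρ.posSemidef.1.eigenvalues) *
        (star hρ.posSemidef.1.eigenvectorUnitary : Matrix (Fin m) (Fin m) ℂ) with hsdef
  have hs : sᴴ = s := isHermitian_mul_mul_conjTranspose
    (hρ.posSemidef.1.eigenvectorUnitary : Matrix (Fin m) (Fin m) ℂ)
    (isHermitian_diagonal_of_self_adjoint _ (by ext i; simp))
  have hsap : ∀ a b, star (s a b) = s b a := fun a b => by
    rw [← Matrix.conjTranspose_apply, hs]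
  -- The Gram matrix of the x's is positive semidefinite
  set M : Matrix (Fin k × Fin n) (Fin k × Fin n) ℂ :=
    Matrix.of fun p q => (star (x p.1) * x q.1) p.2 q.2 with hMdef
  have hMpsd : M.PosSemidef := by
    have : M = (Matrix.of fun (c : Fin n) (p : Fin k × Fin n) => x p.1 c p.2)ᴴ *
        (Matrix.of fun (c : Fin n) (p : Fin k × Fin n) => x p.1 c p.2) := by
      ext p q
      simp [hMdef, Matrix.mul_apply, Matrix.conjTranspose_apply,
        Matrix.star_eq_conjTranspose]
    rw [this]
    exact Matrix.posSemidef_conjTranspose_mul_self _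
  -- The block matrix A of α-values is positive semidefinite by complete positivity
  set A : Matrix (Fin k × Fin m) (Fin k × Fin m) ℂ :=
    Matrix.of fun p q : Fin k × Fin m =>
      α (Matrix.of fun a b => M (p.1, a) (q.1, b)) p.2 q.2 with hAdef
  have hApsd : A.PosSemidef := hCP k M hMpsd
  have hAapp : ∀ p q : Fin k × Fin m, A p q = α (star (x p.1) * x q.1) p.2 q.2 :=
    fun p q => rfl
  -- the rectangular matrix B
  set B : Matrix (Fin k × Fin m) (Fin m) ℂ :=
    Matrix.of fun p c => (s * y p.1) p.2 c with hBdef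
  have hTpsd : (Bᴴ * A * B).PosSemidef := hApsd.conjTranspose_mul_mul_same B
  have hBB : B * Bᴴ = Matrix.of fun q p => ((s * y q.1) * ((y p.1)ᴴ * s)) q.2 p.2 := by
    ext q p
    simp only [hBdef, Matrix.mul_apply, Matrix.conjTranspose_apply, Matrix.of_apply]
    refine Finset.sum_congr rfl fun c _ => ?_
    congr 1
    simp only [Matrix.mul_apply, star_sum, star_mul', hsap]
    exact Finset.sum_congr rfl fun d _ => mul_comm _ _
  -- the key identity
  have key : pairingFunctional α s
      (∑ i, ∑ j, (star (x i) * x j) ⊗ₜ[ℂ] MulOpposite.op (y j * star (y i)))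
      = (Bᴴ * A * B).trace := by
    have h1 : pairingFunctional α s
        (∑ i, ∑ j, (star (x i) * x j) ⊗ₜ[ℂ] MulOpposite.op (y j * star (y i)))
        = ∑ i, ∑ j, (s * α (star (x i) * x j) * s * (y j * star (y i))).trace := by
      simp [pairingFunctional, map_sum]
    have h2 : (Bᴴ * A * B).trace = (A * (B * Bᴴ)).trace := by
      rw [Matrix.trace_mul_cycle, Matrix.trace_mul_comm]
    rw [h1, h2, hBB]
    have h3 : (A * Matrix.of fun q p : Fin k × Fin m => ((s * y q.1) * ((y p.1)ᴴ * s)) q.2 p.2).trace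
        = ∑ i, ∑ a, ∑ j, ∑ b, A (i, a) (j, b) *
            ((s * y j) * ((y i)ᴴ * s)) b a := by
      simp [Matrix.trace, Matrix.diag, Matrix.mul_apply, Fintype.sum_prod_type]
    rw [h3]
    refine Finset.sum_congr rfl fun i _ => ?_
    rw [Finset.sum_comm]
    refine Finset.sum_congr rfl fun j _ => ?_
    simp only [Matrix.star_eq_conjTranspose]
    have h4 : (s * α ((x i)ᴴ * x j) * s * (y j * (y i)ᴴ)).trace
        = (α ((x i)ᴴ * x j) * (s * (y j * ((y i)ᴴ * s)))).trace := by
      simp only [mul_assoc]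
      rw [Matrix.trace_mul_comm]
      simp only [mul_assoc]
    rw [h4, show s * (y j * ((y i)ᴴ * s)) = s * y j * ((y i)ᴴ * s) from
      (mul_assoc _ _ _).symm]
    simp [Matrix.trace, Matrix.diag, Matrix.mul_apply, hAapp, Matrix.star_eq_conjTranspose]
  -- positivity of the trace of the PSD matrix Bᴴ * A * B
  have hdiag : ∀ c, (0 : ℂ) ≤ (Bᴴ * A * B) c c := by
    intro c
    exact hTpsd.diag_nonneg
  have htrace : (0 : ℂ) ≤ (Bᴴ * A * B).trace :=
    Finset.sum_nonneg fun c _ => hdiag c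
  rw [key]
  rcases Complex.le_def.mp htrace with ⟨h1, h2⟩
  exact ⟨by simpa using h1, by simpa using h2.symm⟩
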